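/- arXiv:1803.00502 — 3 statements merged into one kernel-verified Lean document; each statement's English description precedes it below -/
import Mathlib

section
/- Let X = [X₀, X₁] and Y = [Y₀, Y₁] be n×n orthogonal matrices where X₀, Y₀ ∈ ℝ^{n×k}. Then ‖X₀X₀ᵀ − Y₀Y₀ᵀ‖₂ = ‖X₀ᵀY₁‖₂ in the spectral (operator 2-) norm. -/
open Matrix

/-- Spectral (operator 2-) norm of a real matrix. -/
noncomputable def specNorm {m n : ℕ} (A : Matrix (Fin m) (Fin n) ℝ) : ℝ :=
  ‖LinearMap.toContinuousLinearMap (Matrix.toEuclideanLin A)‖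

namespace SpecAux

open scoped Matrix.Norms.L2Operator
open scoped InnerProductSpace

variable {m n p q : Type*} [Fintype m] [Fintype n] [Fintype p] [Fintype q]
  [DecidableEq m] [DecidableEq n] [DecidableEq p] [DecidableEq q]

lemma specNorm_eq {a b : ℕ} (A : Matrix (Fin a) (Fin b) ℝ) : specNorm A = ‖A‖ := rfl

lemma te_mul (A : Matrix m n ℝ) (B : Matrix n p ℝ) (x : EuclideanSpace ℝ p) :
    toEuclideanLin (A * B) x = toEuclideanLin A (toEuclideanLin B x) := by
  rw [toEuclideanLin_eq_toLin, Matrix.toLin_mul (v₂ := PiLp.basisFun 2 ℝ n)]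
  rfl

lemma norm_te_le (M : Matrix m n ℝ) (x : EuclideanSpace ℝ n) :
    ‖toEuclideanLin M x‖ ≤ ‖M‖ * ‖x‖ :=
  M.l2_opNorm_mulVec x

lemma opn_le_bound (M : Matrix m n ℝ) {c : ℝ} (hc : 0 ≤ c)
    (h : ∀ x : EuclideanSpace ℝ n, ‖toEuclideanLin M x‖ ≤ c * ‖x‖) : ‖M‖ ≤ c := by
  rw [Matrix.l2_opNorm_def]
  exact ContinuousLinearMap.opNorm_le_bound _ hc h

lemma inner_te (M : Matrix m n ℝ) (x : EuclideanSpace ℝ n) (y : EuclideanSpace ℝ m) :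
    ⟪toEuclideanLin M x, y⟫_ℝ = ⟪x, toEuclideanLin Mᴴ y⟫_ℝ := by
  rw [Matrix.toEuclideanLin_conjTranspose_eq_adjoint]
  exact (LinearMap.adjoint_inner_right _ _ _).symm

lemma norm_sq_te_conjT (B : Matrix m p ℝ) (y : EuclideanSpace ℝ m) :
    ‖toEuclideanLin Bᴴ y‖ ^ 2 = ⟪y, toEuclideanLin (B * Bᴴ) y⟫_ℝ := by
  rw [← real_inner_self_eq_norm_sq, te_mul]
  rw [inner_te Bᴴ y (toEuclideanLin Bᴴ y), conjTranspose_conjTranspose]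

lemma opn_le_one (U : Matrix m n ℝ) (h : Uᴴ * U = 1) : ‖U‖ ≤ 1 := by
  have h1 : ‖(1 : Matrix n n ℝ)‖ ≤ 1 := by
    refine opn_le_bound _ zero_le_one fun x => ?_
    have : toEuclideanLin (1 : Matrix n n ℝ) x = x := by
      rw [toEuclideanLin_eq_toLin, Matrix.toLin_one]; rfl
    rw [this, one_mul]
  have h2 : ‖U‖ * ‖U‖ = ‖(1 : Matrix n n ℝ)‖ := by
    rw [← Matrix.l2_opNorm_conjTranspose_mul_self, h]
  nlinarith [norm_nonneg U]

lemma le_of_sq_le_sq {a b : ℝ} (ha : 0 ≤ a) (hb : 0 ≤ b) (h : a ^ 2 ≤ b ^ 2) : a ≤ b := by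
  have := Real.sqrt_le_sqrt h
  rwa [Real.sqrt_sq ha, Real.sqrt_sq hb] at this

lemma sqrt_mul_le {a b c : ℝ} (ha : 0 ≤ a) (hb : 0 ≤ b) (hc : 0 ≤ c)
    (h : a * b ^ 2 ≤ c ^ 2) : Real.sqrt a * b ≤ c := by
  have h2 : (Real.sqrt a * b) ^ 2 ≤ c ^ 2 := by
    rw [mul_pow, Real.sq_sqrt ha]; exact h
  exact le_of_sq_le_sq (mul_nonneg (Real.sqrt_nonneg a) hb) hc h2

lemma opn_mul_left (U : Matrix m n ℝ) (hU : Uᴴ * U = 1) (M : Matrix n p ℝ) :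
    ‖U * M‖ = ‖M‖ := by
  refine le_antisymm ?_ ?_
  · have := Matrix.l2_opNorm_mul U M
    nlinarith [opn_le_one U hU, norm_nonneg M, norm_nonneg (U * M)]
  · have hM : ‖M‖ ≤ ‖Uᴴ‖ * ‖U * M‖ := by
      conv_lhs => rw [show M = Uᴴ * (U * M) by rw [← Matrix.mul_assoc, hU, Matrix.one_mul]]
      exact Matrix.l2_opNorm_mul _ _
    have h2 : ‖Uᴴ‖ = ‖U‖ := Matrix.l2_opNorm_conjTranspose U
    nlinarith [opn_le_one U hU, norm_nonneg (U * M), norm_nonneg U]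

lemma opn_mul_right (M : Matrix m n ℝ) (V : Matrix p n ℝ) (hV : Vᴴ * V = 1) :
    ‖M * Vᴴ‖ = ‖M‖ := by
  rw [← Matrix.l2_opNorm_conjTranspose (M * Vᴴ), conjTranspose_mul,
    conjTranspose_conjTranspose, opn_mul_left V hV, Matrix.l2_opNorm_conjTranspose]

/-- equal-rank trick: if `A Aᴴ + B Bᴴ = 1` and `Aᴴ A + Cᴴ C = 1` (A square) then `‖C‖ ≤ ‖B‖`. -/
lemma key_BC (A : Matrix m m ℝ) (B : Matrix m p ℝ) (C : Matrix q m ℝ)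
    (hB : A * Aᴴ + B * Bᴴ = 1) (hC : Aᴴ * A + Cᴴ * C = 1) : ‖C‖ ≤ ‖B‖ := by
  have idB : ∀ y : EuclideanSpace ℝ m,
      ‖toEuclideanLin Aᴴ y‖ ^ 2 + ‖toEuclideanLin Bᴴ y‖ ^ 2 = ‖y‖ ^ 2 := by
    intro y
    have h := congrArg (fun M : Matrix m m ℝ => ⟪y, toEuclideanLin M y⟫_ℝ) hB
    simp only [map_add, LinearMap.add_apply, inner_add_right] at h
    rw [norm_sq_te_conjT A y, norm_sq_te_conjT B y, h]
    have h1 : toEuclideanLin (1 : Matrix m m ℝ) y = y := by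
      rw [toEuclideanLin_eq_toLin, Matrix.toLin_one]; rfl
    rw [h1, real_inner_self_eq_norm_sq]
  have idC : ∀ x : EuclideanSpace ℝ m,
      ‖toEuclideanLin A x‖ ^ 2 + ‖toEuclideanLin C x‖ ^ 2 = ‖x‖ ^ 2 := by
    intro x
    have h := congrArg (fun M : Matrix m m ℝ => ⟪x, toEuclideanLin M x⟫_ℝ) hC
    simp only [map_add, LinearMap.add_apply, inner_add_right] at h
    have hA2 : ‖toEuclideanLin A x‖ ^ 2 = ⟪x, toEuclideanLin (Aᴴ * A) x⟫_ℝ := by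
      have := norm_sq_te_conjT Aᴴ x
      rwa [conjTranspose_conjTranspose] at this
    have hC2 : ‖toEuclideanLin C x‖ ^ 2 = ⟪x, toEuclideanLin (Cᴴ * C) x⟫_ℝ := by
      have := norm_sq_te_conjT Cᴴ x
      rwa [conjTranspose_conjTranspose] at this
    rw [hA2, hC2, h]
    have h1 : toEuclideanLin (1 : Matrix m m ℝ) x = x := by
      rw [toEuclideanLin_eq_toLin, Matrix.toLin_one]; rfl
    rw [h1, real_inner_self_eq_norm_sq]
  rcases le_or_gt 1 ‖B‖ with hB1 | hB1
  · refine le_trans (opn_le_bound C zero_le_one fun x => ?_) hB1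
    refine le_of_sq_le_sq (norm_nonneg _) (by positivity) ?_
    have := idC x
    nlinarith [sq_nonneg ‖toEuclideanLin A x‖]
  · set μ : ℝ := 1 - ‖B‖ ^ 2 with hμdef
    have hμ : 0 < μ := by nlinarith [norm_nonneg B]
    have step1 : ∀ y : EuclideanSpace ℝ m, μ * ‖y‖ ^ 2 ≤ ‖toEuclideanLin Aᴴ y‖ ^ 2 := by
      intro y
      have h1 : ‖toEuclideanLin Bᴴ y‖ ≤ ‖B‖ * ‖y‖ := by
        have := norm_te_le Bᴴ y
        rwa [Matrix.l2_opNorm_conjTranspose] at this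
      have := idB y
      nlinarith [norm_nonneg (toEuclideanLin Bᴴ y), norm_nonneg y, norm_nonneg B]
    have hinj : Function.Injective (toEuclideanLin Aᴴ) := by
      intro y z hyz
      have h0 : toEuclideanLin Aᴴ (y - z) = 0 := by rw [map_sub, hyz, sub_self]
      have h1 := step1 (y - z)
      rw [h0, norm_zero] at h1
      have h2 : ‖y - z‖ ^ 2 = 0 := le_antisymm (by nlinarith) (sq_nonneg _)
      have h3 : ‖y - z‖ = 0 := by
        have h2' := h2
        nlinarith [norm_nonneg (y - z), sq_abs ‖y - z‖]
      rw [norm_eq_zero, sub_eq_zero] at h3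
      exact h3
    have hsurj : Function.Surjective (toEuclideanLin Aᴴ) :=
      LinearMap.injective_iff_surjective.mp hinj
    have step4 : ∀ x : EuclideanSpace ℝ m, Real.sqrt μ * ‖x‖ ≤ ‖toEuclideanLin A x‖ := by
      intro x
      obtain ⟨y, hy⟩ := hsurj x
      have h1 : ⟪toEuclideanLin A x, y⟫_ℝ = ‖x‖ ^ 2 := by
        rw [inner_te A x y, hy, real_inner_self_eq_norm_sq]
      have h2 : ⟪toEuclideanLin A x, y⟫_ℝ ≤ ‖toEuclideanLin A x‖ * ‖y‖ :=
        real_inner_le_norm _ _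
      have h3 : μ * ‖y‖ ^ 2 ≤ ‖x‖ ^ 2 := by rw [← hy]; exact step1 y
      have hsq : Real.sqrt μ ^ 2 = μ := Real.sq_sqrt hμ.le
      have hsqpos : 0 < Real.sqrt μ := Real.sqrt_pos.mpr hμ
      have h4 : Real.sqrt μ * ‖y‖ ≤ ‖x‖ :=
        sqrt_mul_le hμ.le (norm_nonneg y) (norm_nonneg x) h3
      rcases eq_or_lt_of_le (norm_nonneg x) with hx0 | hx0
      · rw [← hx0, mul_zero]; exact norm_nonneg _
      · have h5 : Real.sqrt μ * ‖x‖ * ‖x‖ ≤ ‖toEuclideanLin A x‖ * ‖x‖ := by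
          nlinarith [norm_nonneg (toEuclideanLin A x)]
        exact le_of_mul_le_mul_right h5 hx0
    refine opn_le_bound C (norm_nonneg B) fun x => ?_
    have h1 := step4 x
    have h1' : μ * ‖x‖ ^ 2 ≤ ‖toEuclideanLin A x‖ ^ 2 := by
      have hh : (Real.sqrt μ * ‖x‖) ^ 2 ≤ ‖toEuclideanLin A x‖ ^ 2 := by
        have h0 : 0 ≤ Real.sqrt μ * ‖x‖ := mul_nonneg (Real.sqrt_nonneg μ) (norm_nonneg x)
        nlinarith [norm_nonneg (toEuclideanLin A x)]
      rwa [mul_pow, Real.sq_sqrt hμ.le] at hh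
    have h2 := idC x
    refine le_of_sq_le_sq (norm_nonneg _)
      (mul_nonneg (norm_nonneg B) (norm_nonneg x)) ?_
    have h3 : (‖B‖ * ‖x‖) ^ 2 = (1 - μ) * ‖x‖ ^ 2 := by rw [hμdef]; ring
    linarith

set_option maxHeartbeats 1000000 in
/-- Pythagoras bound for difference of orthogonal projections. -/
lemma proj_diff_le (P Q : Matrix m m ℝ) (hP : Pᴴ = P) (hP2 : P * P = P)
    (hQ : Qᴴ = Q) (hQ2 : Q * Q = Q) :
    ‖P - Q‖ ≤ max ‖P * (1 - Q)‖ ‖(1 - P) * Q‖ := by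
  set a := ‖P * (1 - Q)‖ with ha
  set b := ‖(1 - P) * Q‖ with hb
  have hmax0 : 0 ≤ max a b := le_trans (norm_nonneg _) (le_max_left a b)
  refine opn_le_bound _ hmax0 fun x => ?_
  have hQ0 : Q * (1 - Q) = 0 := by rw [Matrix.mul_sub, Matrix.mul_one, hQ2, sub_self]
  have hP0 : P * (1 - P) = 0 := by rw [Matrix.mul_sub, Matrix.mul_one, hP2, sub_self]
  have hQQ : (1 - Q) * (1 - Q) = 1 - Q := by
    rw [Matrix.sub_mul, Matrix.one_mul, hQ0, sub_zero]
  have hdecomp : P - Q = P * (1 - Q) - (1 - P) * Q := by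
    rw [Matrix.mul_sub, Matrix.mul_one, Matrix.sub_mul, Matrix.one_mul]; abel
  set u := toEuclideanLin (P * (1 - Q)) x with hu
  set v := toEuclideanLin ((1 - P) * Q) x with hv
  have hsplit : toEuclideanLin (P - Q) x = u - v := by
    rw [hdecomp, map_sub, LinearMap.sub_apply]
  have horth : ⟪u, v⟫_ℝ = 0 := by
    have hu' : u = toEuclideanLin P (toEuclideanLin (1 - Q) x) := te_mul _ _ _
    have hv' : v = toEuclideanLin (1 - P) (toEuclideanLin Q x) := te_mul _ _ _
    rw [hu', hv', inner_te, ← te_mul, hP, hP0]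
    simp
  have hu2 : ‖u‖ ≤ a * ‖toEuclideanLin (1 - Q) x‖ := by
    have h : u = toEuclideanLin (P * (1 - Q)) (toEuclideanLin (1 - Q) x) := by
      rw [← te_mul, Matrix.mul_assoc, hQQ]
    rw [h]
    exact norm_te_le _ _
  have hv2 : ‖v‖ ≤ b * ‖toEuclideanLin Q x‖ := by
    have h : v = toEuclideanLin ((1 - P) * Q) (toEuclideanLin Q x) := by
      rw [← te_mul, Matrix.mul_assoc, hQ2]
    rw [h]
    exact norm_te_le _ _
  have hxsum : toEuclideanLin Q x + toEuclideanLin (1 - Q) x = x := by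
    have h1 : Q + (1 - Q) = (1 : Matrix m m ℝ) := by abel
    have h2 : toEuclideanLin Q x + toEuclideanLin (1 - Q) x
        = toEuclideanLin (Q + (1 - Q)) x := by
      rw [map_add, LinearMap.add_apply]
    rw [h2, h1, toEuclideanLin_eq_toLin, Matrix.toLin_one]
    rfl
  have horthx : ⟪toEuclideanLin Q x, toEuclideanLin (1 - Q) x⟫_ℝ = 0 := by
    rw [inner_te, ← te_mul, hQ, hQ0]
    simp
  have hpyth : ‖toEuclideanLin Q x‖ ^ 2 + ‖toEuclideanLin (1 - Q) x‖ ^ 2 = ‖x‖ ^ 2 := by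
    have h := norm_add_sq_real (toEuclideanLin Q x) (toEuclideanLin (1 - Q) x)
    rw [hxsum, horthx] at h
    linarith
  set q1 := ‖toEuclideanLin Q x‖ with hq1d
  set q2 := ‖toEuclideanLin (1 - Q) x‖ with hq2d
  have hq1 : 0 ≤ q1 := norm_nonneg _
  have hq2 : 0 ≤ q2 := norm_nonneg _
  have hu0 : 0 ≤ ‖u‖ := norm_nonneg _
  have hv0 : 0 ≤ ‖v‖ := norm_nonneg _
  have hu2' : ‖u‖ ≤ max a b * q2 :=
    hu2.trans (mul_le_mul_of_nonneg_right (le_max_left a b) hq2)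
  have hv2' : ‖v‖ ≤ max a b * q1 :=
    hv2.trans (mul_le_mul_of_nonneg_right (le_max_right a b) hq1)
  have e1 : ‖u‖ ^ 2 ≤ (max a b) ^ 2 * q2 ^ 2 := by
    nlinarith [mul_self_le_mul_self hu0 hu2']
  have e2 : ‖v‖ ^ 2 ≤ (max a b) ^ 2 * q1 ^ 2 := by
    nlinarith [mul_self_le_mul_self hv0 hv2']
  have hfinal : ‖toEuclideanLin (P - Q) x‖ ^ 2 ≤ (max a b * ‖x‖) ^ 2 := by
    rw [hsplit]
    have hns := norm_sub_sq_real u v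
    have key : ‖u - v‖ ^ 2 = ‖u‖ ^ 2 + ‖v‖ ^ 2 := by rw [hns, horth]; ring
    have hxx : (max a b * ‖x‖) ^ 2 = (max a b) ^ 2 * (q1 ^ 2 + q2 ^ 2) := by
      rw [hpyth]; ring
    rw [key, hxx]
    nlinarith [sq_nonneg (max a b)]
  exact le_of_sq_le_sq (norm_nonneg _) (mul_nonneg hmax0 (norm_nonneg x)) hfinal

lemma blocks_of_fromCols {N K L : Type*} [Fintype N] [Fintype K] [Fintype L]
    [DecidableEq K] [DecidableEq L]
    (A : Matrix N K ℝ) (B : Matrix N L ℝ)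
    (h : (fromCols A B)ᵀ * fromCols A B = 1) :
    Aᵀ * A = 1 ∧ Bᵀ * B = 1 ∧ Aᵀ * B = 0 := by
  rw [transpose_fromCols, fromRows_mul_fromCols, ← fromBlocks_one] at h
  refine ⟨?_, ?_, ?_⟩
  · calc Aᵀ * A = Matrix.toBlocks₁₁ (fromBlocks (Aᵀ*A) (Aᵀ*B) (Bᵀ*A) (Bᵀ*B)) :=
        (Matrix.toBlocks_fromBlocks₁₁ _ _ _ _).symm
      _ = Matrix.toBlocks₁₁ (fromBlocks 1 0 0 1) := by rw [h]
      _ = 1 := Matrix.toBlocks_fromBlocks₁₁ _ _ _ _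
  · calc Bᵀ * B = Matrix.toBlocks₂₂ (fromBlocks (Aᵀ*A) (Aᵀ*B) (Bᵀ*A) (Bᵀ*B)) :=
        (Matrix.toBlocks_fromBlocks₂₂ _ _ _ _).symm
      _ = Matrix.toBlocks₂₂ (fromBlocks 1 0 0 1) := by rw [h]
      _ = 1 := Matrix.toBlocks_fromBlocks₂₂ _ _ _ _
  · calc Aᵀ * B = Matrix.toBlocks₁₂ (fromBlocks (Aᵀ*A) (Aᵀ*B) (Bᵀ*A) (Bᵀ*B)) :=
        (Matrix.toBlocks_fromBlocks₁₂ _ _ _ _).symm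
      _ = Matrix.toBlocks₁₂ (fromBlocks 1 0 0 1) := by rw [h]
      _ = 0 := Matrix.toBlocks_fromBlocks₁₂ _ _ _ _

lemma sum_of_fromCols {N K L : Type*} [Fintype N] [Fintype K] [Fintype L]
    [DecidableEq N]
    (A : Matrix N K ℝ) (B : Matrix N L ℝ)
    (h : fromCols A B * (fromCols A B)ᵀ = 1) :
    A * Aᵀ + B * Bᵀ = 1 := by
  rwa [transpose_fromCols, fromCols_mul_fromRows] at h

end SpecAux

open scoped Matrix.Norms.L2Operator

theorem proj_diff_spectral {n k : ℕ}
    (X₀ Y₀ : Matrix (Fin n) (Fin k) ℝ) (X₁ Y₁ : Matrix (Fin n) (Fin (n - k)) ℝ)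
    (hX : (Matrix.fromCols X₀ X₁)ᵀ * Matrix.fromCols X₀ X₁ = 1)
    (hX' : Matrix.fromCols X₀ X₁ * (Matrix.fromCols X₀ X₁)ᵀ = 1)
    (hY : (Matrix.fromCols Y₀ Y₁)ᵀ * Matrix.fromCols Y₀ Y₁ = 1)
    (hY' : Matrix.fromCols Y₀ Y₁ * (Matrix.fromCols Y₀ Y₁)ᵀ = 1) :
    specNorm (X₀ * X₀ᵀ - Y₀ * Y₀ᵀ) = specNorm (X₀ᵀ * Y₁) := by
  rw [SpecAux.specNorm_eq, SpecAux.specNorm_eq]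
  obtain ⟨hX00, hX11, hX01⟩ := SpecAux.blocks_of_fromCols X₀ X₁ hX
  obtain ⟨hY00, hY11, hY01⟩ := SpecAux.blocks_of_fromCols Y₀ Y₁ hY
  have hXsum := SpecAux.sum_of_fromCols X₀ X₁ hX'
  have hYsum := SpecAux.sum_of_fromCols Y₀ Y₁ hY'
  -- conjTranspose versions
  have hstar : ∀ {a b : ℕ} (M : Matrix (Fin a) (Fin b) ℝ), Mᴴ = Mᵀ :=
    fun M => Matrix.conjTranspose_eq_transpose_of_trivial M
  have hX00' : X₀ᴴ * X₀ = 1 := by rw [hstar]; exact hX00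
  have hX11' : X₁ᴴ * X₁ = 1 := by rw [hstar]; exact hX11
  have hY00' : Y₀ᴴ * Y₀ = 1 := by rw [hstar]; exact hY00
  have hY11' : Y₁ᴴ * Y₁ = 1 := by rw [hstar]; exact hY11
  set P : Matrix (Fin n) (Fin n) ℝ := X₀ * X₀ᵀ with hPdef
  set Q : Matrix (Fin n) (Fin n) ℝ := Y₀ * Y₀ᵀ with hQdef
  set B : Matrix (Fin k) (Fin (n - k)) ℝ := X₀ᵀ * Y₁ with hBdef
  set C : Matrix (Fin (n - k)) (Fin k) ℝ := X₁ᵀ * Y₀ with hCdef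
  set A : Matrix (Fin k) (Fin k) ℝ := X₀ᵀ * Y₀ with hAdef
  -- lower bound : ‖B‖ ≤ ‖P - Q‖
  have hlow : ‖B‖ ≤ ‖P - Q‖ := by
    have key : X₀ᵀ * ((P - Q) * Y₁) = B := by
      rw [hPdef, hQdef, Matrix.sub_mul, Matrix.mul_assoc Y₀ Y₀ᵀ Y₁, hY01,
        Matrix.mul_zero, sub_zero, Matrix.mul_assoc X₀ X₀ᵀ Y₁, ← Matrix.mul_assoc X₀ᵀ X₀ _,
        hX00, Matrix.one_mul, hBdef]
    have h1 : ‖B‖ ≤ ‖X₀ᵀ‖ * ‖(P - Q) * Y₁‖ := by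
      rw [← key]; exact Matrix.l2_opNorm_mul _ _
    have h2 : ‖(P - Q) * Y₁‖ ≤ ‖P - Q‖ * ‖Y₁‖ := Matrix.l2_opNorm_mul _ _
    have h3 : ‖X₀ᵀ‖ ≤ 1 := by
      rw [← hstar, Matrix.l2_opNorm_conjTranspose]
      exact SpecAux.opn_le_one X₀ hX00'
    have h4 : ‖Y₁‖ ≤ 1 := SpecAux.opn_le_one Y₁ hY11'
    nlinarith [norm_nonneg (P - Q), norm_nonneg Y₁, norm_nonneg ((P - Q) * Y₁),
      norm_nonneg (X₀ᵀ)]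
  -- projections
  have hPH : Pᴴ = P := by
    rw [hstar, hPdef, Matrix.transpose_mul, Matrix.transpose_transpose]
  have hP2 : P * P = P := by
    rw [hPdef, Matrix.mul_assoc, ← Matrix.mul_assoc X₀ᵀ X₀ X₀ᵀ, hX00, Matrix.one_mul]
  have hQH : Qᴴ = Q := by
    rw [hstar, hQdef, Matrix.transpose_mul, Matrix.transpose_transpose]
  have hQ2 : Q * Q = Q := by
    rw [hQdef, Matrix.mul_assoc, ← Matrix.mul_assoc Y₀ᵀ Y₀ Y₀ᵀ, hY00, Matrix.one_mul]
  have hup0 := SpecAux.proj_diff_le P Q hPH hP2 hQH hQ2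
  -- identify the two norms
  have h1mQ : (1 : Matrix (Fin n) (Fin n) ℝ) - Q = Y₁ * Y₁ᵀ := by
    rw [sub_eq_iff_eq_add, ← hYsum, hQdef]; abel
  have h1mP : (1 : Matrix (Fin n) (Fin n) ℝ) - P = X₁ * X₁ᵀ := by
    rw [sub_eq_iff_eq_add, ← hXsum, hPdef]; abel
  have hPQnorm : ‖P * (1 - Q)‖ = ‖B‖ := by
    have hfac : P * ((1 : Matrix (Fin n) (Fin n) ℝ) - Q) = X₀ * (B * Y₁ᵀ) := by
      rw [h1mQ, hPdef, hBdef, Matrix.mul_assoc, ← Matrix.mul_assoc X₀ᵀ Y₁ Y₁ᵀ,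
        Matrix.mul_assoc]
    rw [hfac, SpecAux.opn_mul_left X₀ hX00']
    have : B * Y₁ᵀ = B * Y₁ᴴ := by rw [hstar]
    rw [this, SpecAux.opn_mul_right B Y₁ hY11']
  have hQPnorm : ‖(1 - P) * Q‖ = ‖C‖ := by
    have hfac : ((1 : Matrix (Fin n) (Fin n) ℝ) - P) * Q = X₁ * (C * Y₀ᵀ) := by
      rw [h1mP, hQdef, hCdef, Matrix.mul_assoc, ← Matrix.mul_assoc X₁ᵀ Y₀ Y₀ᵀ,
        Matrix.mul_assoc]
    rw [hfac, SpecAux.opn_mul_left X₁ hX11']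
    have : C * Y₀ᵀ = C * Y₀ᴴ := by rw [hstar]
    rw [this, SpecAux.opn_mul_right C Y₀ hY00']
  -- ‖C‖ ≤ ‖B‖
  have hCB : ‖C‖ ≤ ‖B‖ := by
    refine SpecAux.key_BC A B C ?_ ?_
    · rw [hstar A, hstar B, hAdef, hBdef, Matrix.transpose_mul, Matrix.transpose_mul,
        Matrix.transpose_transpose]
      calc X₀ᵀ * Y₀ * (Y₀ᵀ * X₀) + X₀ᵀ * Y₁ * (Y₁ᵀ * X₀)
          = X₀ᵀ * ((Y₀ * Y₀ᵀ + Y₁ * Y₁ᵀ) * X₀) := by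
            rw [Matrix.add_mul, Matrix.mul_add]
            rw [Matrix.mul_assoc X₀ᵀ Y₀ _, Matrix.mul_assoc X₀ᵀ Y₁ _,
              Matrix.mul_assoc Y₀ Y₀ᵀ X₀, Matrix.mul_assoc Y₁ Y₁ᵀ X₀]
        _ = 1 := by rw [hYsum, Matrix.one_mul, hX00]
    · rw [hstar A, hstar C, hAdef, hCdef, Matrix.transpose_mul, Matrix.transpose_mul,
        Matrix.transpose_transpose, Matrix.transpose_transpose]
      calc Y₀ᵀ * X₀ * (X₀ᵀ * Y₀) + Y₀ᵀ * X₁ * (X₁ᵀ * Y₀)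
          = Y₀ᵀ * ((X₀ * X₀ᵀ + X₁ * X₁ᵀ) * Y₀) := by
            rw [Matrix.add_mul, Matrix.mul_add]
            rw [Matrix.mul_assoc Y₀ᵀ X₀ _, Matrix.mul_assoc Y₀ᵀ X₁ _,
              Matrix.mul_assoc X₀ X₀ᵀ Y₀, Matrix.mul_assoc X₁ X₁ᵀ Y₀]
        _ = 1 := by rw [hXsum, Matrix.one_mul, hY00]
  have hup : ‖P - Q‖ ≤ ‖B‖ := by
    rw [hPQnorm, hQPnorm] at hup0
    rwa [max_eq_left hCB] at hup0
  exact le_antisymm hup hlow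
end

section
/- Let E ∈ ℝ^{n×d} and Ê ∈ ℝ^{n×k} with k ≤ d, both having orthonormal columns. Then ‖EEᵀ − ÊÊᵀ‖_F = √(d − k + 2‖ÊᵀE^⊥‖_F²), where E^⊥ ∈ ℝ^{n×(n−d)} is a matrix whose columns form an orthonormal basis for the orthogonal complement of the column space of E. -/
open Matrix

/-- Frobenius norm of a real matrix. -/
noncomputable def frob {m n : ℕ} (A : Matrix (Fin m) (Fin n) ℝ) : ℝ :=
  Real.sqrt (∑ i, ∑ j, (A i j) ^ 2)

lemma sum_sq_eq_trace {m p : ℕ} (A : Matrix (Fin m) (Fin p) ℝ) :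
    ∑ i, ∑ j, (A i j) ^ 2 = Matrix.trace (A * Aᵀ) := by
  simp [Matrix.trace, Matrix.mul_apply, Matrix.diag, sq]

theorem pip_loss_orthonormal_case {n d k : ℕ} (hk : k ≤ d)
    (E : Matrix (Fin n) (Fin d) ℝ) (Ehat : Matrix (Fin n) (Fin k) ℝ)
    (Eperp : Matrix (Fin n) (Fin (n - d)) ℝ)
    (hE : Eᵀ * E = 1) (hEhat : Ehatᵀ * Ehat = 1)
    (hfull : (Matrix.fromCols E Eperp)ᵀ * Matrix.fromCols E Eperp = 1)
    (hfull' : Matrix.fromCols E Eperp * (Matrix.fromCols E Eperp)ᵀ = 1) :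
    frob (E * Eᵀ - Ehat * Ehatᵀ)
      = Real.sqrt ((d : ℝ) - (k : ℝ) + 2 * (frob (Ehatᵀ * Eperp)) ^ 2) := by
  have hperp : E * Eᵀ + Eperp * Eperpᵀ = 1 := by
    simpa [Matrix.transpose_fromCols, Matrix.fromCols_mul_fromRows] using hfull'
  set t : ℝ := ∑ i, ∑ j, ((Ehatᵀ * Eperp) i j) ^ 2 with ht
  have htnn : 0 ≤ t := Finset.sum_nonneg fun i _ => Finset.sum_nonneg fun j _ => sq_nonneg _
  -- key trace identities
  have h1 : Matrix.trace (E * Eᵀ * (E * Eᵀ)) = (d : ℝ) := by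
    have : E * Eᵀ * (E * Eᵀ) = E * ((Eᵀ * E) * Eᵀ) := by
      simp only [Matrix.mul_assoc]
    rw [this, hE, Matrix.one_mul, Matrix.trace_mul_comm, hE, Matrix.trace_one]
    simp
  have h2 : Matrix.trace (Ehat * Ehatᵀ * (Ehat * Ehatᵀ)) = (k : ℝ) := by
    have : Ehat * Ehatᵀ * (Ehat * Ehatᵀ) = Ehat * ((Ehatᵀ * Ehat) * Ehatᵀ) := by
      simp only [Matrix.mul_assoc]
    rw [this, hEhat, Matrix.one_mul, Matrix.trace_mul_comm, hEhat, Matrix.trace_one]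
    simp
  have h3 : Matrix.trace (E * Eᵀ * (Ehat * Ehatᵀ)) = (k : ℝ) - t := by
    have hc : Matrix.trace (E * Eᵀ * (Ehat * Ehatᵀ)) =
        Matrix.trace (Ehatᵀ * (E * Eᵀ) * Ehat) := by
      rw [Matrix.trace_mul_comm (E * Eᵀ) (Ehat * Ehatᵀ)]
      simp only [Matrix.mul_assoc]
      rw [Matrix.trace_mul_comm]
      simp only [Matrix.mul_assoc]
    have hEE : E * Eᵀ = 1 - Eperp * Eperpᵀ := by
      rw [← hperp]; abel
    rw [hc, hEE]
    have : Ehatᵀ * (1 - Eperp * Eperpᵀ) * Ehat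
        = Ehatᵀ * Ehat - (Ehatᵀ * Eperp) * (Ehatᵀ * Eperp)ᵀ := by
      simp [Matrix.mul_sub, Matrix.sub_mul, Matrix.mul_assoc, Matrix.transpose_mul]
    rw [this, Matrix.trace_sub, hEhat, Matrix.trace_one, ← sum_sq_eq_trace, ← ht]
    simp
  -- compute the squared Frobenius norm of the difference
  have hexp : (E * Eᵀ - Ehat * Ehatᵀ) * (E * Eᵀ - Ehat * Ehatᵀ)ᵀ
      = E * Eᵀ * (E * Eᵀ) - E * Eᵀ * (Ehat * Ehatᵀ)
        - Ehat * Ehatᵀ * (E * Eᵀ) + Ehat * Ehatᵀ * (Ehat * Ehatᵀ) := by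
    simp only [Matrix.transpose_sub, Matrix.transpose_mul, Matrix.transpose_transpose]
    noncomm_ring
  have hsum : ∑ i, ∑ j, ((E * Eᵀ - Ehat * Ehatᵀ) i j) ^ 2
      = (d : ℝ) - (k : ℝ) + 2 * t := by
    rw [sum_sq_eq_trace, hexp, Matrix.trace_add, Matrix.trace_sub, Matrix.trace_sub,
      h1, h2, h3, Matrix.trace_mul_comm (Ehat * Ehatᵀ) (E * Eᵀ), h3]
    ring
  have hfr : frob (Ehatᵀ * Eperp) ^ 2 = t := Real.sq_sqrt htnn
  rw [frob, hsum, hfr]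
end

section
/- Mirsky–Wielandt–Hoffman inequality (Frobenius case): Let A and Ã = A + Z be real symmetric n×n matrices with decreasingly ordered eigenvalues λ_i and λ̃_i. Then Σ_{i=1}^{n} (λ_i − λ̃_i)² ≤ ‖Z‖_F². -/
open Matrix Finset

variable {n : ℕ}

lemma trace_prod_eq (A B : Matrix (Fin n) (Fin n) ℝ) (hA : A.IsHermitian) (hB : B.IsHermitian) :
    (A * B).trace = ∑ i, ∑ j, hA.eigenvalues i * hB.eigenvalues j *
      ((star (hA.eigenvectorUnitary : Matrix (Fin n) (Fin n) ℝ) *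
        (hB.eigenvectorUnitary : Matrix (Fin n) (Fin n) ℝ)) i j) ^ 2 := by
  set U : Matrix (Fin n) (Fin n) ℝ := (hA.eigenvectorUnitary : Matrix (Fin n) (Fin n) ℝ) with hU
  set V : Matrix (Fin n) (Fin n) ℝ := (hB.eigenvectorUnitary : Matrix (Fin n) (Fin n) ℝ) with hV
  set W : Matrix (Fin n) (Fin n) ℝ := star U * V with hW
  set Dl : Matrix (Fin n) (Fin n) ℝ := diagonal hA.eigenvalues
  set Dk : Matrix (Fin n) (Fin n) ℝ := diagonal hB.eigenvalues
  have hUs : star U * U = 1 := mem_unitaryGroup_iff'.mp hA.eigenvectorUnitary.2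
  have h1 : A = U * Dl * star U := by
    have := hA.spectral_theorem
    simpa [RCLike.ofReal_real_eq_id, Dl] using this
  have h2 : B = V * Dk * star V := by
    have := hB.spectral_theorem
    simpa [RCLike.ofReal_real_eq_id, Dk] using this
  have hWs : star V * U = star W := by simp [hW, Matrix.star_mul]
  calc (A * B).trace = (U * (Dl * W * Dk * star V)).trace := by
        rw [h1, h2]; congr 1; simp only [hW, Matrix.mul_assoc]
    _ = ((Dl * W * Dk * star V) * U).trace := trace_mul_comm _ _
    _ = (Dl * (W * Dk * star W)).trace := by
        rw [Matrix.mul_assoc, hWs]; congr 1; simp only [Matrix.mul_assoc]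
    _ = ∑ i, ∑ j, hA.eigenvalues i * hB.eigenvalues j * (W i j) ^ 2 := by
        rw [Matrix.trace]
        refine Finset.sum_congr rfl fun i _ => ?_
        rw [Matrix.diag_apply, Matrix.diagonal_mul, Matrix.mul_apply, Finset.mul_sum]
        refine Finset.sum_congr rfl fun j _ => ?_
        rw [Matrix.mul_diagonal, Matrix.star_apply, star_trivial]
        ring

lemma trace_sq_eq (A : Matrix (Fin n) (Fin n) ℝ) (hA : A.IsHermitian) :
    (A * A).trace = ∑ i, hA.eigenvalues i ^ 2 := by
  rw [trace_prod_eq A A hA hA, mem_unitaryGroup_iff'.mp hA.eigenvectorUnitary.2]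
  refine Finset.sum_congr rfl fun i _ => ?_
  rw [Finset.sum_eq_single i]
  · simp [Matrix.one_apply, sq]
  · intro j _ hj
    simp [Matrix.one_apply, Ne.symm hj]
  · simp

lemma overlap_doublyStochastic (A B : Matrix (Fin n) (Fin n) ℝ)
    (hA : A.IsHermitian) (hB : B.IsHermitian) :
    (Matrix.of fun i j => ((star (hA.eigenvectorUnitary : Matrix (Fin n) (Fin n) ℝ) *
        (hB.eigenvectorUnitary : Matrix (Fin n) (Fin n) ℝ)) i j) ^ 2)
      ∈ doublyStochastic ℝ (Fin n) := by
  set U : Matrix (Fin n) (Fin n) ℝ := (hA.eigenvectorUnitary : Matrix (Fin n) (Fin n) ℝ)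
  set V : Matrix (Fin n) (Fin n) ℝ := (hB.eigenvectorUnitary : Matrix (Fin n) (Fin n) ℝ)
  set W : Matrix (Fin n) (Fin n) ℝ := star U * V with hW
  have hUU : U * star U = 1 := mem_unitaryGroup_iff.mp hA.eigenvectorUnitary.2
  have hUs : star U * U = 1 := mem_unitaryGroup_iff'.mp hA.eigenvectorUnitary.2
  have hVV : V * star V = 1 := mem_unitaryGroup_iff.mp hB.eigenvectorUnitary.2
  have hVs : star V * V = 1 := mem_unitaryGroup_iff'.mp hB.eigenvectorUnitary.2
  have hWW : W * star W = 1 := by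
    have : star W = star V * U := by simp [hW, Matrix.star_mul]
    rw [this, hW]
    calc star U * V * (star V * U) = star U * (V * star V) * U := by
          simp only [Matrix.mul_assoc]
      _ = 1 := by rw [hVV, Matrix.mul_one, hUs]
  have hWs : star W * W = 1 := by
    have : star W = star V * U := by simp [hW, Matrix.star_mul]
    rw [this, hW]
    calc star V * U * (star U * V) = star V * (U * star U) * V := by
          simp only [Matrix.mul_assoc]
      _ = 1 := by rw [hUU, Matrix.mul_one, hVs]
  rw [mem_doublyStochastic_iff_sum]
  refine ⟨fun i j => sq_nonneg _, fun i => ?_, fun j => ?_⟩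
  · have h := Matrix.ext_iff.mpr hWW i i
    simp only [Matrix.mul_apply, Matrix.star_apply, star_trivial, Matrix.one_apply_eq] at h
    simpa [sq] using h
  · have h := Matrix.ext_iff.mpr hWs j j
    simp only [Matrix.mul_apply, Matrix.star_apply, star_trivial, Matrix.one_apply_eq] at h
    simpa [sq, mul_comm] using h

lemma sum_perm_le_sorted (μ μt lam kap : Fin n → ℝ)
    (hμm : Antitone μ) (hμtm : Antitone μt)
    (e et : Equiv.Perm (Fin n)) (hme : μ = lam ∘ e) (hmet : μt = kap ∘ et)
    (σ : Equiv.Perm (Fin n)) :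
    ∑ i, lam i * kap (σ i) ≤ ∑ i, μ i * μt i := by
  have hmono : Monovary μ μt := hμm.monovary hμtm
  have key := hmono.sum_mul_comp_perm_le_sum_mul (σ := (e.trans σ).trans et.symm)
  refine le_trans (le_of_eq ?_) key
  rw [← Equiv.sum_comp e (fun j => lam j * kap (σ j))]
  refine Finset.sum_congr rfl fun i _ => ?_
  simp [hme, hmet, Equiv.trans_apply, Function.comp, Equiv.apply_symm_apply]

theorem mirsky_wielandt_hoffman {n : ℕ} (A Z : Matrix (Fin n) (Fin n) ℝ)
    (hA : A.IsHermitian) (hAZ : (A + Z).IsHermitian)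
    (μ μt : Fin n → ℝ)
    (hμ : ∃ e : Equiv.Perm (Fin n), μ = hA.eigenvalues ∘ e)
    (hμt : ∃ e : Equiv.Perm (Fin n), μt = hAZ.eigenvalues ∘ e)
    (hμm : Antitone μ) (hμtm : Antitone μt) :
    ∑ i, (μ i - μt i) ^ 2 ≤ ∑ i, ∑ j, (Z i j) ^ 2 := by
  obtain ⟨e, he⟩ := hμ
  obtain ⟨et, het⟩ := hμt
  set B : Matrix (Fin n) (Fin n) ℝ := A + Z with hBdef
  have hZ : Z.IsHermitian := by
    have h := hAZ.sub hA
    rwa [add_sub_cancel_left] at h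
  -- RHS = trace (Z * Z)
  have hRHS : ∑ i, ∑ j, (Z i j) ^ 2 = (Z * Z).trace := by
    rw [Matrix.trace]
    refine Finset.sum_congr rfl fun i _ => ?_
    rw [Matrix.diag_apply, Matrix.mul_apply]
    refine Finset.sum_congr rfl fun j _ => ?_
    have : Z j i = Z i j := by
      have := hZ.apply j i
      simpa using this.symm
    rw [this, sq]
  -- trace (Z*Z) in terms of A, B
  have hZB : Z = B - A := by simp [hBdef]
  have hZZ : Z * Z = B * B - A * B - B * A + A * A := by rw [hZB]; noncomm_ring
  have htZZ : (Z * Z).trace = (A * A).trace + (B * B).trace - 2 * (A * B).trace := by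
    rw [hZZ]
    rw [Matrix.trace_add, Matrix.trace_sub, Matrix.trace_sub, trace_mul_comm B A]
    ring
  -- eigenvalue sums
  have hsum1 : ∑ i, μ i ^ 2 = (A * A).trace := by
    rw [trace_sq_eq A hA, he, ← Equiv.sum_comp e (fun j => hA.eigenvalues j ^ 2)]
    simp [Function.comp]
  have hsum2 : ∑ i, μt i ^ 2 = (B * B).trace := by
    rw [trace_sq_eq B hAZ, het, ← Equiv.sum_comp et (fun j => hAZ.eigenvalues j ^ 2)]
    simp [Function.comp]
  -- key inequality : trace (A*B) ≤ ∑ μ μt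
  set W : Matrix (Fin n) (Fin n) ℝ :=
    star (hA.eigenvectorUnitary : Matrix (Fin n) (Fin n) ℝ) *
      (hAZ.eigenvectorUnitary : Matrix (Fin n) (Fin n) ℝ) with hWdef
  have hds := overlap_doublyStochastic A B hA hAZ
  obtain ⟨w, hw0, hw1, hwsum⟩ := exists_eq_sum_perm_of_mem_doublyStochastic hds
  have hentry : ∀ i j, (W i j) ^ 2 = ∑ σ : Equiv.Perm (Fin n), w σ * (σ.permMatrix ℝ) i j := by
    intro i j
    have h := Matrix.ext_iff.mpr hwsum i j
    simp only [Matrix.of_apply] at h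
    rw [← h]
    simp [Matrix.sum_apply]
  have hperm : ∀ (σ : Equiv.Perm (Fin n)) i j, (σ.permMatrix ℝ) i j = if σ i = j then 1 else 0 := by
    intro σ i j
    simp [Equiv.Perm.permMatrix, PEquiv.toMatrix_apply, Equiv.toPEquiv_apply, eq_comm]
  have hkey : (A * B).trace ≤ ∑ i, μ i * μt i := by
    rw [trace_prod_eq A B hA hAZ]
    have expand : ∀ i, ∑ j, hA.eigenvalues i * hAZ.eigenvalues j * (W i j) ^ 2
        = ∑ σ : Equiv.Perm (Fin n), w σ * (hA.eigenvalues i * hAZ.eigenvalues (σ i)) := by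
      intro i
      calc ∑ j, hA.eigenvalues i * hAZ.eigenvalues j * (W i j) ^ 2
          = ∑ j, ∑ σ : Equiv.Perm (Fin n),
              w σ * (hA.eigenvalues i * hAZ.eigenvalues j * (σ.permMatrix ℝ) i j) := by
            refine Finset.sum_congr rfl fun j _ => ?_
            rw [hentry, Finset.mul_sum]
            exact Finset.sum_congr rfl fun σ _ => by ring
        _ = ∑ σ : Equiv.Perm (Fin n), ∑ j,
              w σ * (hA.eigenvalues i * hAZ.eigenvalues j * (σ.permMatrix ℝ) i j) :=
            Finset.sum_comm
        _ = ∑ σ : Equiv.Perm (Fin n), w σ * (hA.eigenvalues i * hAZ.eigenvalues (σ i)) := by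
            refine Finset.sum_congr rfl fun σ _ => ?_
            rw [← Finset.mul_sum]
            congr 1
            rw [Finset.sum_eq_single (σ i)]
            · rw [hperm, if_pos rfl]; ring
            · intro j _ hj; rw [hperm, if_neg (Ne.symm hj)]; ring
            · simp
    have hstep : ∑ i, ∑ j, hA.eigenvalues i * hAZ.eigenvalues j * (W i j) ^ 2
        = ∑ σ : Equiv.Perm (Fin n), w σ * ∑ i, hA.eigenvalues i * hAZ.eigenvalues (σ i) := by
      calc ∑ i, ∑ j, hA.eigenvalues i * hAZ.eigenvalues j * (W i j) ^ 2
          = ∑ i, ∑ σ : Equiv.Perm (Fin n),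
              w σ * (hA.eigenvalues i * hAZ.eigenvalues (σ i)) :=
            Finset.sum_congr rfl fun i _ => expand i
        _ = ∑ σ : Equiv.Perm (Fin n), ∑ i,
              w σ * (hA.eigenvalues i * hAZ.eigenvalues (σ i)) := Finset.sum_comm
        _ = ∑ σ : Equiv.Perm (Fin n), w σ * ∑ i, hA.eigenvalues i * hAZ.eigenvalues (σ i) := by
            simp [Finset.mul_sum]
    rw [hstep]
    calc ∑ σ : Equiv.Perm (Fin n), w σ * ∑ i, hA.eigenvalues i * hAZ.eigenvalues (σ i)
        ≤ ∑ σ : Equiv.Perm (Fin n), w σ * ∑ i, μ i * μt i := by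
          refine Finset.sum_le_sum fun σ _ => ?_
          exact mul_le_mul_of_nonneg_left
            (sum_perm_le_sorted μ μt hA.eigenvalues hAZ.eigenvalues hμm hμtm e et he het σ)
            (hw0 σ)
      _ = ∑ i, μ i * μt i := by rw [← Finset.sum_mul, hw1, one_mul]
  -- combine
  have hLHS : ∑ i, (μ i - μt i) ^ 2 = ∑ i, μ i ^ 2 + ∑ i, μt i ^ 2 - 2 * ∑ i, μ i * μt i := by
    have hpt : ∀ i : Fin n, (μ i - μt i) ^ 2 = μ i ^ 2 + μt i ^ 2 - 2 * (μ i * μt i) :=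
      fun i => by ring
    simp_rw [hpt]
    rw [Finset.sum_sub_distrib, Finset.sum_add_distrib, ← Finset.mul_sum]
  rw [hRHS, htZZ, hLHS]
  linarith
end
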